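/- Let 𝒪 = {(x,v,a) ∈ ℝ³ : v ≠ 0} and let π : 𝒪 → ℝ² be π(x,v,a) = (x/v, a/v). Let X₁(x,v,a) = (0,0,2v), X₂(x,v,a) = (0,v,2a), X₃(x,v,a) = (v,a,3a²/(2v)) be vector fields on 𝒪, and define on ℝ² with coordinates (x̄,ā) the vector fields X̄₁ = (0,2), X̄₂(x̄,ā) = (−x̄, ā), X̄₃(x̄,ā) = (1 − x̄ā, ā²/2). Then (Dπ)(p)(Xα(p)) = X̄α(π(p)) for every p ∈ 𝒪 and α ∈ {1,2,3}; moreover, at every point of ℝ², [X̄₁,X̄₂] = X̄₁, [X̄₁,X̄₃] = 2X̄₂, and [X̄₂,X̄₃] = X̄₃, so the projected Vessiot–Guldberg Lie algebra is again isomorphic to 𝔰𝔩₂. -/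

import Mathlib

/-- The pointwise Lie bracket of two vector fields on (an open subset of) ℝⁿ,
    `[V,W](p) = (DW)(p)(V(p)) − (DV)(p)(W(p))`. -/
noncomputable def vbracket {n : ℕ} (V W : (Fin n → ℝ) → (Fin n → ℝ)) :
    (Fin n → ℝ) → (Fin n → ℝ) :=
  fun p => fderiv ℝ W p (V p) - fderiv ℝ V p (W p)

/-- Coordinates on 𝒪 ⊂ ℝ³ are (x,v,a) = (p 0, p 1, p 2). The Vessiot–Guldberg
vector fields X₁, X₂, X₃ of the Schwarz system, indexed by `Fin 3`. -/
noncomputable def schX : Fin 3 → (Fin 3 → ℝ) → (Fin 3 → ℝ) :=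
  ![fun p => ![0, 0, 2 * p 1],
    fun p => ![0, p 1, 2 * p 2],
    fun p => ![p 1, p 2, 3 * (p 2) ^ 2 / (2 * p 1)]]

/-- The projection π : 𝒪 → ℝ², (x,v,a) ↦ (x/v, a/v). -/
noncomputable def schPi : (Fin 3 → ℝ) → (Fin 2 → ℝ) :=
  fun p => ![p 0 / p 1, p 2 / p 1]

/-- The reduced vector fields X̄₁, X̄₂, X̄₃ on ℝ² with coordinates (x̄,ā). -/
noncomputable def schXbar : Fin 3 → (Fin 2 → ℝ) → (Fin 2 → ℝ) :=
  ![fun _ => ![0, 2],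
    fun q => ![-q 0, q 1],
    fun q => ![1 - q 0 * q 1, (q 1) ^ 2 / 2]]

open ContinuousLinearMap in
lemma schPi_hasFDerivAt (p : Fin 3 → ℝ) (hp : p 1 ≠ 0) :
    HasFDerivAt schPi
      ((ContinuousLinearMap.pi
        ![p 0 • ((-(p 1 ^ 2)⁻¹) • (proj 1 : (Fin 3 → ℝ) →L[ℝ] ℝ)) + (p 1)⁻¹ • proj 0,
          p 2 • ((-(p 1 ^ 2)⁻¹) • (proj 1 : (Fin 3 → ℝ) →L[ℝ] ℝ)) + (p 1)⁻¹ • proj 2] :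
        (Fin 3 → ℝ) →L[ℝ] (Fin 2 → ℝ))) p := by
  have hinv : HasFDerivAt (fun q : Fin 3 → ℝ => (q 1)⁻¹)
      ((-(p 1 ^ 2)⁻¹) • (proj 1 : (Fin 3 → ℝ) →L[ℝ] ℝ)) p :=
    (hasDerivAt_inv hp).comp_hasFDerivAt p (hasFDerivAt_apply (𝕜 := ℝ) 1 p)
  apply hasFDerivAt_pi''
  intro i
  rw [ContinuousLinearMap.proj_pi]
  fin_cases i
  · simp only [schPi, Matrix.cons_val_zero, div_eq_mul_inv]
    exact (hasFDerivAt_apply (𝕜 := ℝ) 0 p).mul hinv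
  · simp only [schPi, Matrix.cons_val_one, Matrix.head_cons, div_eq_mul_inv]
    exact (hasFDerivAt_apply (𝕜 := ℝ) 2 p).mul hinv

open ContinuousLinearMap in
lemma schXbar1_hasFDerivAt (q : Fin 2 → ℝ) :
    HasFDerivAt (schXbar 1) ((ContinuousLinearMap.pi ![-(proj 0 : (Fin 2 → ℝ) →L[ℝ] ℝ), proj 1] : (Fin 2 → ℝ) →L[ℝ] (Fin 2 → ℝ))) q := by
  apply hasFDerivAt_pi''
  intro i
  rw [ContinuousLinearMap.proj_pi]
  fin_cases i
  · simp only [schXbar, Matrix.cons_val_one, Matrix.head_cons, Matrix.cons_val_zero]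
    exact (hasFDerivAt_apply (𝕜 := ℝ) 0 q).neg
  · simp only [schXbar, Matrix.cons_val_one, Matrix.head_cons]
    exact hasFDerivAt_apply (𝕜 := ℝ) 1 q

open ContinuousLinearMap in
lemma schXbar2_hasFDerivAt (q : Fin 2 → ℝ) :
    HasFDerivAt (schXbar 2)
      ((ContinuousLinearMap.pi
        ![-(q 0 • (proj 1 : (Fin 2 → ℝ) →L[ℝ] ℝ) + q 1 • proj 0),
           (2⁻¹ : ℝ) • (q 1 • (proj 1 : (Fin 2 → ℝ) →L[ℝ] ℝ) + q 1 • proj 1)] :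
        (Fin 2 → ℝ) →L[ℝ] (Fin 2 → ℝ))) q := by
  apply hasFDerivAt_pi''
  intro i
  rw [ContinuousLinearMap.proj_pi]
  fin_cases i
  · simp only [schXbar, Matrix.cons_val_two, Matrix.tail_cons, Matrix.head_cons,
      Matrix.cons_val_zero]
    exact ((hasFDerivAt_apply (𝕜 := ℝ) 0 q).mul (hasFDerivAt_apply (𝕜 := ℝ) 1 q)).const_sub 1
  · show HasFDerivAt (fun x => schXbar 2 x 1)
      ((2⁻¹ : ℝ) • (q 1 • (proj 1 : (Fin 2 → ℝ) →L[ℝ] ℝ) + q 1 • proj 1)) q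
    have he : (fun q : Fin 2 → ℝ => schXbar 2 q 1) = fun q => 2⁻¹ * (q 1 * q 1) := by
      funext x; simp [schXbar]; ring
    rw [he]
    exact ((hasFDerivAt_apply (𝕜 := ℝ) 1 q).mul (hasFDerivAt_apply (𝕜 := ℝ) 1 q)).const_mul 2⁻¹

/-- Each Xα is π-related to X̄α on 𝒪 = {v ≠ 0}, and the reduced vector fields
satisfy [X̄₁,X̄₂] = X̄₁, [X̄₁,X̄₃] = 2X̄₂, [X̄₂,X̄₃] = X̄₃ at every point of ℝ²:
the projected Vessiot–Guldberg Lie algebra is again isomorphic to 𝔰𝔩₂. -/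
theorem schwarz_reduction_projection :
    (∀ p : Fin 3 → ℝ, p 1 ≠ 0 → ∀ α : Fin 3,
      fderiv ℝ schPi p (schX α p) = schXbar α (schPi p)) ∧
    (∀ q : Fin 2 → ℝ,
      vbracket (schXbar 0) (schXbar 1) q = schXbar 0 q ∧
      vbracket (schXbar 0) (schXbar 2) q = (2 : ℝ) • schXbar 1 q ∧
      vbracket (schXbar 1) (schXbar 2) q = schXbar 2 q) := by
  constructor
  · intro p hp α
    rw [(schPi_hasFDerivAt p hp).fderiv]
    fin_cases α <;> funext i <;> fin_cases i <;>
      simp [schX, schXbar, schPi, Matrix.cons_val_zero, Matrix.cons_val_one,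
        Matrix.head_cons, Matrix.cons_val_two, Matrix.tail_cons,
        ContinuousLinearMap.pi_apply, ContinuousLinearMap.add_apply,
        ContinuousLinearMap.smul_apply, ContinuousLinearMap.proj_apply] <;>
      field_simp <;> ring
  · intro q
    have h0 : fderiv ℝ (schXbar 0) q = 0 := by
      have : schXbar 0 = fun _ : Fin 2 → ℝ => ![(0 : ℝ), 2] := by
        funext x; simp [schXbar]
      rw [this]; exact fderiv_const_apply _
    have h1 := (schXbar1_hasFDerivAt q).fderiv
    have h2 := (schXbar2_hasFDerivAt q).fderiv
    refine ⟨?_, ?_, ?_⟩ <;>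
      · funext i
        simp only [vbracket, h0, h1, h2, Pi.sub_apply]
        fin_cases i <;>
          simp [schXbar, Matrix.cons_val_zero, Matrix.cons_val_one,
            Matrix.head_cons, Matrix.cons_val_two, Matrix.tail_cons,
            ContinuousLinearMap.pi_apply, ContinuousLinearMap.add_apply, ContinuousLinearMap.neg_apply,
            ContinuousLinearMap.smul_apply, ContinuousLinearMap.proj_apply] <;>
          ring
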